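/- For every choice of gains k₁,k₂,k₃,k₄ > 0 there exists a constant a > 0 (depending only on the gains) such that the bidirectional backstepping feedback satisfies, for every state (ρ,δ,γ) with ρ > 0, |v_b| + |ω_b| ≤ a (r + r² + r³), where r = √(ρ² + δ² + γ²). (This is the cubic bound |v|+|ω| ≤ α̃(|(ρ,δ,γ)|) with α̃ of the form α̃(r) = a(r + r² + r³) used in the prescribed-time and fixed-time designs to show that the inputs remain bounded and converge to zero.) -/
import Mathlib


/-!
STATEMENT 14: Cubic bound on the bidirectional backstepping feedback: for all
gains k₁,k₂,k₃,k₄ > 0 there is a > 0 such that for every state with ρ > 0,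
|v_b| + |ω_b| ≤ a (r + r² + r³) with r = √(ρ² + δ² + γ²).
-/
noncomputable section

open Real

/-- σ(δ) = √(1 + 4k₂²δ²) -/
def sigmaB (k₂ δ : ℝ) : ℝ := Real.sqrt (1 + 4 * k₂ ^ 2 * δ ^ 2)

/-- backstepping variable z = γ + (1/2) arctan(2k₂δ) -/
def zB (k₂ δ γ : ℝ) : ℝ := γ + (1 / 2) * Real.arctan (2 * k₂ * δ)

/-- ψ(r,s) = (sin(r−s) + sin s)/r for r ≠ 0, ψ(0,s) = cos s -/
def psiB (r s : ℝ) : ℝ :=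
  if r = 0 then Real.cos s else (Real.sin (r - s) + Real.sin s) / r

/-- ψ₂(r,s) = (−cos(r−s) + cos s)/r for r ≠ 0, ψ₂(0,s) = −sin s -/
def psiB2 (r s : ℝ) : ℝ :=
  if r = 0 then -Real.sin s else (-Real.cos (r - s) + Real.cos s) / r

/-- bidirectional forward velocity v = k₁ ρ σ(δ) cos γ -/
def vB (k₁ k₂ ρ δ γ : ℝ) : ℝ := k₁ * ρ * sigmaB k₂ δ * Real.cos γ

/-- ω̃ of the bidirectional backstepping feedback -/
def omTildeB (k₁ k₂ k₃ k₄ ρ δ γ : ℝ) : ℝ :=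
  k₄ * zB k₂ δ γ
    - k₃ * ρ ^ 2 * sigmaB k₂ δ * psiB2 (2 * zB k₂ δ γ) (2 * γ)
    + k₃ * δ * sigmaB k₂ δ * psiB (2 * zB k₂ δ γ) (2 * γ)
    + (k₁ * k₂ / sigmaB k₂ δ ^ 2)
        * (sigmaB k₂ δ * psiB (2 * zB k₂ δ γ) (2 * γ) * zB k₂ δ γ - k₂ * δ)

/-- bidirectional angular velocity ω = (v/ρ) sin γ + ω̃ -/
def omB (k₁ k₂ k₃ k₄ ρ δ γ : ℝ) : ℝ :=
  (vB k₁ k₂ ρ δ γ / ρ) * Real.sin γ + omTildeB k₁ k₂ k₃ k₄ ρ δ γ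

/-- Lyapunov function V = ρ² + δ² + q² z², q = √(k₁/k₃) -/
def VB (k₁ k₂ k₃ ρ δ γ : ℝ) : ℝ :=
  ρ ^ 2 + δ ^ 2 + Real.sqrt (k₁ / k₃) ^ 2 * zB k₂ δ γ ^ 2


lemma arctan_abs_le' (x : ℝ) : |Real.arctan x| ≤ |x| := by
  have key : ∀ y : ℝ, 0 < y → Real.arctan y ≤ y := by
    intro y hy
    have h1 : 0 < Real.arctan y := by
      simpa [Real.arctan_zero] using Real.arctan_strictMono hy
    have h2 := Real.lt_tan h1 (Real.arctan_lt_pi_div_two y)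
    rw [Real.tan_arctan] at h2
    exact h2.le
  rcases lt_trichotomy x 0 with h | h | h
  · rw [abs_of_neg h, abs_of_neg]
    · have := key (-x) (by linarith)
      rw [Real.arctan_neg] at this; linarith
    · simpa [Real.arctan_zero] using Real.arctan_strictMono h
  · simp [h, Real.arctan_zero]
  · rw [abs_of_pos h, abs_of_pos]
    · exact key x h
    · simpa [Real.arctan_zero] using Real.arctan_strictMono h

lemma psiB_abs_le' (r s : ℝ) : |psiB r s| ≤ 1 := by
  unfold psiB
  split_ifs with h
  · exact Real.abs_cos_le_one s
  · rw [abs_div, div_le_one (abs_pos.2 h)]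
    have h0 := Real.sin_sub_sin (r - s) (-s)
    rw [Real.sin_neg, sub_neg_eq_add] at h0
    rw [h0, abs_mul, abs_mul]
    have h1 : |Real.sin ((r - s - -s) / 2)| ≤ |(r - s - -s) / 2| := Real.abs_sin_le_abs
    have h2 : |Real.cos ((r - s + -s) / 2)| ≤ 1 := Real.abs_cos_le_one _
    have h3 : |(2:ℝ)| = 2 := by norm_num
    have h4 : |(r - s - -s) / 2| = |r| / 2 := by
      rw [show (r - s - -s) / 2 = r / 2 by ring, abs_div]; norm_num
    calc |(2:ℝ)| * |Real.sin ((r - s - -s) / 2)| * |Real.cos ((r - s + -s) / 2)|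
        ≤ 2 * (|r| / 2) * 1 := by
          rw [h3]
          exact mul_le_mul (mul_le_mul le_rfl (h1.trans_eq h4) (abs_nonneg _) (by norm_num))
            h2 (abs_nonneg _) (by positivity)
      _ = |r| := by ring

lemma psiB2_abs_le' (r s : ℝ) : |psiB2 r s| ≤ 1 := by
  unfold psiB2
  split_ifs with h
  · rw [abs_neg]; exact Real.abs_sin_le_one s
  · rw [abs_div, div_le_one (abs_pos.2 h)]
    have h0 := Real.cos_sub_cos s (r - s)
    have h0' : -Real.cos (r - s) + Real.cos s
        = -2 * Real.sin ((s + (r - s)) / 2) * Real.sin ((s - (r - s)) / 2) := by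
      linarith [h0]
    rw [h0', abs_mul, abs_mul]
    have h1 : |Real.sin ((s + (r - s)) / 2)| ≤ |(s + (r - s)) / 2| := Real.abs_sin_le_abs
    have h2 : |Real.sin ((s - (r - s)) / 2)| ≤ 1 := Real.abs_sin_le_one _
    have h3 : |(-2:ℝ)| = 2 := by norm_num
    have h4 : |(s + (r - s)) / 2| = |r| / 2 := by
      rw [show (s + (r - s)) / 2 = r / 2 by ring, abs_div]; norm_num
    calc |(-2:ℝ)| * |Real.sin ((s + (r - s)) / 2)| * |Real.sin ((s - (r - s)) / 2)|
        ≤ 2 * (|r| / 2) * 1 := by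
          rw [h3]
          exact mul_le_mul (mul_le_mul le_rfl (h1.trans_eq h4) (abs_nonneg _) (by norm_num))
            h2 (abs_nonneg _) (by positivity)
      _ = |r| := by ring

lemma mul_le_mul4' {a b c d a' b' c' d' : ℝ} (ha : a ≤ a') (hb : b ≤ b') (hc : c ≤ c')
    (hd : d ≤ d') (ha0 : 0 ≤ a) (hb0 : 0 ≤ b) (hc0 : 0 ≤ c) (hd0 : 0 ≤ d)
    (ha0' : 0 ≤ a') (hb0' : 0 ≤ b') (hc0' : 0 ≤ c') : a * b * c * d ≤ a' * b' * c' * d' :=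
  mul_le_mul (mul_le_mul (mul_le_mul ha hb hb0 ha0') hc hc0 (mul_nonneg ha0' hb0')) hd hd0
    (mul_nonneg (mul_nonneg ha0' hb0') hc0')

lemma combine' {c₁ c₂ c₃ r : ℝ} (h1 : 0 ≤ c₁) (h2 : 0 ≤ c₂) (h3 : 0 ≤ c₃) (hr : 0 ≤ r) :
    c₁ * r + c₂ * r ^ 2 + c₃ * r ^ 3 ≤ (c₁ + c₂ + c₃) * (r + r ^ 2 + r ^ 3) := by
  nlinarith [mul_nonneg h1 (pow_nonneg hr 2), mul_nonneg h1 (pow_nonneg hr 3),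
    mul_nonneg h2 hr, mul_nonneg h2 (pow_nonneg hr 3),
    mul_nonneg h3 hr, mul_nonneg h3 (pow_nonneg hr 2)]

set_option maxHeartbeats 1000000 in
theorem bidirectional_feedback_cubic_bound
    (k₁ k₂ k₃ k₄ : ℝ) (hk₁ : 0 < k₁) (hk₂ : 0 < k₂) (hk₃ : 0 < k₃) (hk₄ : 0 < k₄) :
    ∃ a : ℝ, 0 < a ∧
      ∀ ρ δ γ : ℝ, 0 < ρ →
        |vB k₁ k₂ ρ δ γ|
          + |k₁ * sigmaB k₂ δ * Real.cos γ * Real.sin γ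
              + omTildeB k₁ k₂ k₃ k₄ ρ δ γ|
        ≤ a * (Real.sqrt (ρ ^ 2 + δ ^ 2 + γ ^ 2)
            + Real.sqrt (ρ ^ 2 + δ ^ 2 + γ ^ 2) ^ 2
            + Real.sqrt (ρ ^ 2 + δ ^ 2 + γ ^ 2) ^ 3) := by
  set c₁ : ℝ := 2 * k₁ + k₄ * (1 + k₂) + k₃ + k₁ * k₂ * (1 + k₂) + k₁ * k₂ ^ 2 with hc₁
  set c₂ : ℝ := 4 * k₁ * k₂ + k₃ + 2 * k₂ * k₃ + 2 * k₁ * k₂ ^ 2 * (1 + k₂) with hc₂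
  set c₃ : ℝ := 2 * k₂ * k₃ with hc₃
  have hc₁0 : 0 ≤ c₁ := by positivity
  have hc₂0 : 0 ≤ c₂ := by positivity
  have hc₃0 : 0 ≤ c₃ := by positivity
  refine ⟨c₁ + c₂ + c₃, by positivity, ?_⟩
  intro ρ δ γ hρ
  set r := Real.sqrt (ρ ^ 2 + δ ^ 2 + γ ^ 2) with hrdef
  have hr0 : 0 ≤ r := Real.sqrt_nonneg _
  have hρr : ρ ≤ r := by
    rw [hrdef]
    calc ρ = Real.sqrt (ρ ^ 2) := (Real.sqrt_sq hρ.le).symm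
      _ ≤ _ := Real.sqrt_le_sqrt (by nlinarith [sq_nonneg δ, sq_nonneg γ])
  have hδr : |δ| ≤ r := by
    rw [hrdef]
    calc |δ| = Real.sqrt (δ ^ 2) := (Real.sqrt_sq_eq_abs δ).symm
      _ ≤ _ := Real.sqrt_le_sqrt (by nlinarith [sq_nonneg ρ, sq_nonneg γ])
  have hγr : |γ| ≤ r := by
    rw [hrdef]
    calc |γ| = Real.sqrt (γ ^ 2) := (Real.sqrt_sq_eq_abs γ).symm
      _ ≤ _ := Real.sqrt_le_sqrt (by nlinarith [sq_nonneg ρ, sq_nonneg δ])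
  set σ := sigmaB k₂ δ with hσdef
  set z := zB k₂ δ γ with hzdef
  set p := psiB (2 * z) (2 * γ) with hpdef
  set p2 := psiB2 (2 * z) (2 * γ) with hp2def
  have hσ1 : 1 ≤ σ := by
    rw [hσdef, sigmaB]
    calc (1:ℝ) = Real.sqrt 1 := by simp
      _ ≤ _ := Real.sqrt_le_sqrt (by nlinarith [sq_nonneg (k₂ * δ)])
  have hσ0 : 0 < σ := lt_of_lt_of_le one_pos hσ1
  have hB0 : 0 ≤ 1 + 2 * k₂ * r := by nlinarith [mul_nonneg hk₂.le hr0]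
  have hσB : σ ≤ 1 + 2 * k₂ * r := by
    rw [hσdef, sigmaB]
    have hδ2 : δ ^ 2 ≤ r ^ 2 := by nlinarith [sq_abs δ, abs_nonneg δ]
    calc Real.sqrt (1 + 4 * k₂ ^ 2 * δ ^ 2)
        ≤ Real.sqrt ((1 + 2 * k₂ * r) ^ 2) :=
          Real.sqrt_le_sqrt (by nlinarith [mul_nonneg hk₂.le hr0])
      _ = 1 + 2 * k₂ * r := Real.sqrt_sq hB0
  have hz : |z| ≤ (1 + k₂) * r := by
    rw [hzdef, zB]
    calc |γ + 1 / 2 * Real.arctan (2 * k₂ * δ)|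
        ≤ |γ| + |1 / 2 * Real.arctan (2 * k₂ * δ)| := abs_add_le _ _
      _ = |γ| + 1 / 2 * |Real.arctan (2 * k₂ * δ)| := by
          rw [abs_mul]; norm_num
      _ ≤ |γ| + 1 / 2 * |2 * k₂ * δ| := by
          have := arctan_abs_le' (2 * k₂ * δ); linarith
      _ = |γ| + k₂ * |δ| := by
          rw [abs_mul, abs_mul, abs_of_nonneg hk₂.le]; norm_num; ring
      _ ≤ r + k₂ * r := by
          have := mul_le_mul_of_nonneg_left hδr hk₂.le; linarith
      _ = (1 + k₂) * r := by ring
  have hp1 : |p| ≤ 1 := psiB_abs_le' _ _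
  have hp21 : |p2| ≤ 1 := psiB2_abs_le' _ _
  have hsin : |Real.sin γ| ≤ r := (Real.abs_sin_le_abs).trans hγr
  have hcos : |Real.cos γ| ≤ 1 := Real.abs_cos_le_one γ
  -- term bounds
  have hv : |vB k₁ k₂ ρ δ γ| ≤ k₁ * r * (1 + 2 * k₂ * r) * 1 := by
    rw [vB, ← hσdef, abs_mul, abs_mul, abs_mul, abs_of_pos hk₁, abs_of_pos hρ,
      abs_of_pos hσ0]
    exact mul_le_mul4' le_rfl hρr hσB hcos hk₁.le hρ.le hσ0.le (abs_nonneg _)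
      hk₁.le hr0 hB0
  have hA : |k₁ * σ * Real.cos γ * Real.sin γ| ≤ k₁ * (1 + 2 * k₂ * r) * 1 * r := by
    rw [abs_mul, abs_mul, abs_mul, abs_of_pos hk₁, abs_of_pos hσ0]
    exact mul_le_mul4' le_rfl hσB hcos hsin hk₁.le hσ0.le (abs_nonneg _) (abs_nonneg _)
      hk₁.le hB0 (by norm_num)
  have hB1 : |k₄ * z| ≤ k₄ * ((1 + k₂) * r) := by
    rw [abs_mul, abs_of_pos hk₄]
    exact mul_le_mul_of_nonneg_left hz hk₄.le
  have hB2 : |k₃ * ρ ^ 2 * σ * p2| ≤ k₃ * r ^ 2 * (1 + 2 * k₂ * r) * 1 := by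
    rw [abs_mul, abs_mul, abs_mul, abs_of_pos hk₃, abs_of_nonneg (sq_nonneg ρ),
      abs_of_pos hσ0]
    have hρ2 : ρ ^ 2 ≤ r ^ 2 := by nlinarith
    exact mul_le_mul4' le_rfl hρ2 hσB hp21 hk₃.le (sq_nonneg ρ) hσ0.le (abs_nonneg _)
      hk₃.le (sq_nonneg r) hB0
  have hB3 : |k₃ * δ * σ * p| ≤ k₃ * r * (1 + 2 * k₂ * r) * 1 := by
    rw [abs_mul, abs_mul, abs_mul, abs_of_pos hk₃, abs_of_pos hσ0]
    exact mul_le_mul4' le_rfl hδr hσB hp1 hk₃.le (abs_nonneg _) hσ0.le (abs_nonneg _)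
      hk₃.le hr0 hB0
  have hB4 : |k₁ * k₂ / σ ^ 2 * (σ * p * z - k₂ * δ)|
      ≤ k₁ * k₂ * ((1 + 2 * k₂ * r) * 1 * ((1 + k₂) * r) + k₂ * r) := by
    rw [abs_mul]
    have h1 : |k₁ * k₂ / σ ^ 2| ≤ k₁ * k₂ := by
      rw [abs_of_pos (by positivity)]
      rw [div_le_iff₀ (by positivity)]
      have hσ2 : 1 ≤ σ ^ 2 := by nlinarith
      nlinarith [mul_pos hk₁ hk₂]
    have h2 : |σ * p * z - k₂ * δ| ≤ (1 + 2 * k₂ * r) * 1 * ((1 + k₂) * r) + k₂ * r := by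
      calc |σ * p * z - k₂ * δ| ≤ |σ * p * z| + |k₂ * δ| := abs_sub _ _
        _ ≤ (1 + 2 * k₂ * r) * 1 * ((1 + k₂) * r) + k₂ * r := by
            have ha : |σ * p * z| ≤ (1 + 2 * k₂ * r) * 1 * ((1 + k₂) * r) := by
              rw [abs_mul, abs_mul, abs_of_pos hσ0]
              exact mul_le_mul (mul_le_mul hσB hp1 (abs_nonneg _) hB0) hz (abs_nonneg _)
                (by nlinarith)
            have hb : |k₂ * δ| ≤ k₂ * r := by
              rw [abs_mul, abs_of_pos hk₂]
              exact mul_le_mul_of_nonneg_left hδr hk₂.le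
            linarith
    exact mul_le_mul h1 h2 (abs_nonneg _) (by positivity)
  -- triangle inequality
  have htri : |k₁ * σ * Real.cos γ * Real.sin γ + omTildeB k₁ k₂ k₃ k₄ ρ δ γ|
      ≤ |k₁ * σ * Real.cos γ * Real.sin γ| + |k₄ * z| + |k₃ * ρ ^ 2 * σ * p2|
        + |k₃ * δ * σ * p| + |k₁ * k₂ / σ ^ 2 * (σ * p * z - k₂ * δ)| := by
    rw [omTildeB, ← hσdef, ← hzdef, ← hpdef, ← hp2def]
    set A := k₁ * σ * Real.cos γ * Real.sin γ
    set B1 := k₄ * z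
    set B2 := k₃ * ρ ^ 2 * σ * p2
    set B3 := k₃ * δ * σ * p
    set B4 := k₁ * k₂ / σ ^ 2 * (σ * p * z - k₂ * δ)
    have e1 := le_abs_self A; have e1' := neg_abs_le A
    have e2 := le_abs_self B1; have e2' := neg_abs_le B1
    have e3 := le_abs_self B2; have e3' := neg_abs_le B2
    have e4 := le_abs_self B3; have e4' := neg_abs_le B3
    have e5 := le_abs_self B4; have e5' := neg_abs_le B4
    rw [abs_le]
    constructor <;> linarith
  -- combine
  have hsum : |vB k₁ k₂ ρ δ γ|
      + |k₁ * σ * Real.cos γ * Real.sin γ + omTildeB k₁ k₂ k₃ k₄ ρ δ γ|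
      ≤ c₁ * r + c₂ * r ^ 2 + c₃ * r ^ 3 := by
    have expand : k₁ * r * (1 + 2 * k₂ * r) * 1
        + (k₁ * (1 + 2 * k₂ * r) * 1 * r + k₄ * ((1 + k₂) * r)
          + k₃ * r ^ 2 * (1 + 2 * k₂ * r) * 1 + k₃ * r * (1 + 2 * k₂ * r) * 1
          + k₁ * k₂ * ((1 + 2 * k₂ * r) * 1 * ((1 + k₂) * r) + k₂ * r))
        = c₁ * r + c₂ * r ^ 2 + c₃ * r ^ 3 := by
      rw [hc₁, hc₂, hc₃]; ring
    linarith [hv, htri, hA, hB1, hB2, hB3, hB4]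
  exact hsum.trans (combine' hc₁0 hc₂0 hc₃0 hr0)

end
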